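/- The centralizer Z_1(n) of C[S_n] with respect to the subgroup S_{n-1} (permutations fixing n) is a commutative algebra. -/

import Mathlib

open scoped Classical
open Finset

noncomputable section

namespace NC

/-- Conjugation of a group-algebra element by a permutation, extended linearly. -/
def conjA (n : ℕ) (σ : Equiv.Perm (Fin n)) (g : MonoidAlgebra ℂ (Equiv.Perm (Fin n))) :
    MonoidAlgebra ℂ (Equiv.Perm (Fin n)) :=
  MonoidAlgebra.ofCoeff (Finsupp.mapDomain (fun π => σ * π * σ⁻¹) g.coeff)

/-- Cycle type of a permutation, including fixed points as parts equal to 1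
(a partition of n, as a multiset). -/
def fullType {n : ℕ} (π : Equiv.Perm (Fin n)) : Multiset ℕ :=
  π.cycleType + Multiset.replicate (n - π.support.card) 1

/-- The length of the cycle of `π` containing `x`. -/
def cycLenAt {n : ℕ} (π : Equiv.Perm (Fin n)) (x : Fin n) : ℕ :=
  if π x = x then 1 else (π.cycleOf x).support.card

/-- The conjugacy class `C_λ` of permutations of `S_{n+1}` of cycle type `λ`. -/
def Ccl (n : ℕ) (lam : Multiset ℕ) : Finset (Equiv.Perm (Fin (n + 1))) :=
  Finset.univ.filter fun π => fullType π = lam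

/-- `C_{λ,i}`: permutations of cycle type `λ` having the largest symbol on a cycle of length `i`. -/
def Cset (n : ℕ) (lam : Multiset ℕ) (i : ℕ) : Finset (Equiv.Perm (Fin (n + 1))) :=
  (Ccl n lam).filter fun π => cycLenAt π (Fin.last n) = i

/-- The standard basis element `K_{λ,i}` of `Z_1(n+1)`. -/
def Kel (n : ℕ) (lam : Multiset ℕ) (i : ℕ) : MonoidAlgebra ℂ (Equiv.Perm (Fin (n + 1))) :=
  ∑ π ∈ Cset n lam i, MonoidAlgebra.single π 1

/-- Membership in the centralizer `Z_1(n+1)` of the group algebra with respect to the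
subgroup of permutations fixing the largest symbol. -/
def Z1mem (n : ℕ) (g : MonoidAlgebra ℂ (Equiv.Perm (Fin (n + 1)))) : Prop :=
  ∀ σ : Equiv.Perm (Fin (n + 1)), σ (Fin.last n) = Fin.last n → conjA (n + 1) σ g = g

/-- A filling `T : Fin m → Fin m × Fin m` (position of each entry, as (row, column))
is a standard Young tableau: it is injective and every initial segment of entries occupies a
lower set of cells (entries increase along rows and down columns). -/
def IsSYT (m : ℕ) (T : Fin m → Fin m × Fin m) : Prop :=
  Function.Injective T ∧
    ∀ k : Fin m, ∀ c : Fin m × Fin m, c.1 ≤ (T k).1 → c.2 ≤ (T k).2 → ∃ j : Fin m, j ≤ k ∧ T j = c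

/-- Length of row `r` of a filling. -/
def rowLen (m : ℕ) (T : Fin m → Fin m × Fin m) (r : ℕ) : ℕ :=
  (Finset.univ.filter fun k => ((T k).1 : ℕ) = r).card

/-- The shape of a filling, as the multiset of its (positive) row lengths. -/
def shapeOf (m : ℕ) (T : Fin m → Fin m × Fin m) : Multiset ℕ :=
  ((Multiset.range m).map fun r => rowLen m T r).filter (0 < ·)

/-- The set of standard Young tableaux of shape `λ` with `m` cells. -/
def SYTall (m : ℕ) (lam : Multiset ℕ) : Finset (Fin m → Fin m × Fin m) :=
  Finset.univ.filter fun T => IsSYT m T ∧ shapeOf m T = lam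

/-- `d_λ`, the number of standard Young tableaux of shape `λ`. -/
def dnum (m : ℕ) (lam : Multiset ℕ) : ℕ := (SYTall m lam).card

/-- `SYT_{λ,i}`: standard Young tableaux of shape `λ` in which the largest entry lies at the
end of a row of length `i`. -/
def SYTset (n : ℕ) (lam : Multiset ℕ) (i : ℕ) :
    Finset (Fin (n + 1) → Fin (n + 1) × Fin (n + 1)) :=
  (SYTall (n + 1) lam).filter fun T => rowLen (n + 1) T ((T (Fin.last n)).1 : ℕ) = i

/-- The content (column minus row) of the entry `k` in the tableau `T`. -/
def ct (m : ℕ) (T : Fin m → Fin m × Fin m) (k : Fin m) : ℤ :=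
  ((T k).2 : ℤ) - ((T k).1 : ℤ)

/-- The Jucys–Murphy element `J_{x+1} = Σ_{y<x} (y, x)` of `ℂ[S_m]`. -/
def JM (m : ℕ) (x : Fin m) : MonoidAlgebra ℂ (Equiv.Perm (Fin m)) :=
  ∑ y ∈ Finset.univ.filter (fun y : Fin m => y < x), MonoidAlgebra.single (Equiv.swap y x) 1

/-- Young's seminormal unit `e_T`: the Gelfand–Tsetlin idempotent attached to `T`, realized by
Murphy's interpolation formula as a product of spectral projections of the Jucys–Murphy
elements onto the content eigenvalues of `T`. -/
def eTg (m : ℕ) (T : Fin m → Fin m × Fin m) : MonoidAlgebra ℂ (Equiv.Perm (Fin m)) :=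
  ((List.finRange m).map fun (x : Fin m) =>
    (((((Finset.Icc (-((x : ℕ) : ℤ)) ((x : ℕ) : ℤ)).erase (ct m T x)).sort (· ≤ ·)).map fun c =>
      (((ct m T x - c : ℤ) : ℂ))⁻¹ •
        (JM m x - ((c : ℤ) : ℂ) • (1 : MonoidAlgebra ℂ (Equiv.Perm (Fin m))))).prod)).prod

/-- The central element `X^λ = Σ_{T ∈ SYT_λ} e_T` of `ℂ[S_m]` (the central orthogonal
idempotent indexed by `λ`). -/
def Xg (m : ℕ) (lam : Multiset ℕ) : MonoidAlgebra ℂ (Equiv.Perm (Fin m)) :=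
  ∑ T ∈ SYTall m lam, eTg m T

/-- The `Z_1`-idempotent `Γ^{λ,i} = Σ_{T ∈ SYT_{λ,i}} e_T`. -/
def Gam (n : ℕ) (lam : Multiset ℕ) (i : ℕ) : MonoidAlgebra ℂ (Equiv.Perm (Fin (n + 1))) :=
  ∑ T ∈ SYTset n lam i, eTg (n + 1) T

/-- `i_-(λ)`: the partition obtained from `λ` by replacing one part `i` by `i - 1`. -/
def iminus (lam : Multiset ℕ) (i : ℕ) : Multiset ℕ :=
  ((i - 1) ::ₘ lam.erase i).filter (0 < ·)

/-- `c_{λ,i} = i - Σ_{k ≥ i} m_k(λ)`: the content of the cell containing the largest entry in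
any tableau of shape `λ` with that entry at the end of a row of length `i`. -/
def cCorner (lam : Multiset ℕ) (i : ℕ) : ℤ :=
  (i : ℤ) - ((lam.filter fun k => i ≤ k).card : ℤ)

/-- The multiset of contents of the cells of the Ferrers diagram of `λ`. -/
def contentsM (lam : Multiset ℕ) : Multiset ℤ :=
  ↑((((lam.sort (· ≤ ·)).reverse.zipIdx).map fun p =>
      (List.range p.1).map fun c => (c : ℤ) - (p.2 : ℤ)).flatten)

/-- The generalized character `γ^{μ,j}_{λ,i} = (n!/d_μ) [K_{λ,i}] Γ^{μ,j}`, the (normalized)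
coefficient of the standard basis element `K_{λ,i}` in `Γ^{μ,j}` (computed as the average of the
coefficients of `Γ^{μ,j}` over the class `C_{λ,i}`). -/
def gam (n : ℕ) (mu : Multiset ℕ) (j : ℕ) (lam : Multiset ℕ) (i : ℕ) : ℂ :=
  ((Nat.factorial (n + 1) : ℂ) / (dnum (n + 1) mu : ℂ)) *
    ((∑ π ∈ Cset n lam i, (Gam n mu j).coeff π) / ((Cset n lam i).card : ℂ))

/-- The irreducible character `χ^μ` evaluated at `π`: `(n!/d_μ)` times the coefficient of `π`
in the central idempotent `X^μ`. -/
def chi (n : ℕ) (mu : Multiset ℕ) (π : Equiv.Perm (Fin (n + 1))) : ℂ :=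
  ((Nat.factorial (n + 1) : ℂ) / (dnum (n + 1) mu : ℂ)) * (Xg (n + 1) mu).coeff π

/-- The embedding of a permutation of `Fin n` into `S_{n+1}` fixing the last symbol. -/
def extPerm (n : ℕ) (π : Equiv.Perm (Fin n)) : Equiv.Perm (Fin (n + 1)) :=
  π.viaFintypeEmbedding (Fin.castSuccEmb : Fin n ↪ Fin (n + 1))

/-- The induced embedding of group algebras `ℂ[S_n] → ℂ[S_{n+1}]`. -/
def embA (n : ℕ) (g : MonoidAlgebra ℂ (Equiv.Perm (Fin n))) :
    MonoidAlgebra ℂ (Equiv.Perm (Fin (n + 1))) :=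
  MonoidAlgebra.ofCoeff (Finsupp.mapDomain (extPerm n) g.coeff)


lemma exists_fix_conj {α : Type*} [Fintype α] [LinearOrder α]
    (π : Equiv.Perm α) (a : α) :
    ∃ τ : Equiv.Perm α, τ a = a ∧ ∀ x, τ (π x) = π⁻¹ (τ x) := by
  classical
  have aux : ∀ (i k : ℤ) (c : α), (π ^ i) c = (π ^ k) c → (π ^ (-i)) c = (π ^ (-k)) c := by
    intro i k c hik
    have h1 : (π ^ (-i - k) * π ^ i) c = (π ^ (-i - k) * π ^ k) c := by
      rw [Equiv.Perm.mul_apply, Equiv.Perm.mul_apply, hik]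
    rw [← zpow_add, ← zpow_add] at h1
    have e1 : -i - k + i = -k := by ring
    have e2 : -i - k + k = -i := by ring
    rw [e1, e2] at h1
    exact h1.symm
  set S : α → Finset α := fun x => Finset.univ.filter (fun y => π.SameCycle y x) with hS
  have hSne : ∀ x, (S x).Nonempty := fun x => ⟨x, by simp only [hS, Finset.mem_filter, Finset.mem_univ, true_and]; exact ⟨0, by simp⟩⟩
  set b : α → α := fun x => if π.SameCycle a x then a else (S x).min' (hSne x) with hbdef
  have hb : ∀ x, π.SameCycle (b x) x := by
    intro x
    by_cases hx : π.SameCycle a x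
    · simpa [hbdef, hx] using hx
    · have hm : (S x).min' (hSne x) ∈ S x := Finset.min'_mem _ _
      simp only [hS, Finset.mem_filter] at hm
      simpa [hbdef, hx] using hm.2
  have hbc : ∀ x y, π.SameCycle x y → b x = b y := by
    intro x y hxy
    by_cases hx : π.SameCycle a x
    · simp [hbdef, hx, hx.trans hxy]
    · have hy : ¬ π.SameCycle a y := fun hy => hx (hy.trans hxy.symm)
      have hSxy : S x = S y := by
        ext z
        simp only [hS, Finset.mem_filter, Finset.mem_univ, true_and]
        exact ⟨fun hz => hz.trans hxy, fun hz => hz.trans hxy.symm⟩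
      simp [hbdef, hx, hy, hSxy]
  set j : α → ℤ := fun x => (hb x).choose with hjdef
  have hj : ∀ x, (π ^ (j x)) (b x) = x := fun x => (hb x).choose_spec
  set f : α → α := fun x => (π ^ (-(j x))) (b x) with hfdef
  have hbb : ∀ x, b (b x) = b x := fun x => hbc _ _ (hb x)
  have hbf : ∀ x, b (f x) = b x := by
    intro x
    have : π.SameCycle (f x) (b x) := ⟨j x, by
      show (π ^ j x) ((π ^ (-(j x))) (b x)) = b x
      rw [← Equiv.Perm.mul_apply, ← zpow_add]
      simp⟩
    rw [hbc _ _ this, hbb]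
  have hinj : Function.Injective f := by
    intro x y hxy
    have hbxy : b x = b y := by rw [← hbf x, ← hbf y, hxy]
    have h2 : (π ^ (-(j x))) (b x) = (π ^ (-(j y))) (b x) := by
      conv_rhs => rw [hbxy]
      exact hxy
    have h3 := aux _ _ _ h2
    simp only [neg_neg] at h3
    rw [hj x] at h3
    rw [hbxy] at h3
    rw [hj y] at h3
    exact h3
  refine ⟨Equiv.ofBijective f (Finite.injective_iff_bijective.mp hinj), ?_, ?_⟩
  · show f a = a
    have hba : b a = a := by simp [hbdef, Equiv.Perm.SameCycle.refl]
    have h0 : (π ^ (j a)) a = (π ^ (0 : ℤ)) a := by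
      have := hj a; rw [hba] at this; simpa using this
    have := aux _ _ _ h0
    simp only [neg_zero, zpow_zero, Equiv.Perm.coe_one, id_eq] at this
    rw [hfdef]
    simp only [hba]
    exact this
  · intro x
    show f (π x) = π⁻¹ (f x)
    have hbp : b (π x) = b x := (hbc (π x) x ⟨-1, by simp⟩)
    have h1 : (π ^ (j (π x))) (b x) = (π ^ (1 + j x)) (b x) := by
      have := hj (π x); rw [hbp] at this
      rw [this, zpow_add, Equiv.Perm.mul_apply, hj x]
      simp
    have h2 := aux _ _ _ h1
    have h3 : (π ^ (-(1 + j x))) (b x) = π⁻¹ ((π ^ (-(j x))) (b x)) := by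
      rw [neg_add, zpow_add, Equiv.Perm.mul_apply]
      simp
    show (π ^ (-(j (π x)))) (b (π x)) = π⁻¹ ((π ^ (-(j x))) (b x))
    rw [hbp, h2, h3]

lemma conjA_coeff (n : ℕ) (σ : Equiv.Perm (Fin (n + 1)))
    (k : MonoidAlgebra ℂ (Equiv.Perm (Fin (n + 1)))) (hσ : conjA (n + 1) σ k = k)
    (π : Equiv.Perm (Fin (n + 1))) : k.coeff (σ * π * σ⁻¹) = k.coeff π := by
  have hinj : Function.Injective (fun ρ : Equiv.Perm (Fin (n + 1)) => σ * ρ * σ⁻¹) := by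
    intro x y hxy
    simp only at hxy
    have := congrArg (fun z => σ⁻¹ * z * σ) hxy
    simpa [mul_assoc] using this
  have h2 : (conjA (n + 1) σ k).coeff (σ * π * σ⁻¹) = k.coeff π := Finsupp.mapDomain_apply hinj k.coeff π
  rwa [hσ] at h2

lemma Z1_inv_coeff (n : ℕ) (k : MonoidAlgebra ℂ (Equiv.Perm (Fin (n + 1))))
    (hk : Z1mem n k) (π : Equiv.Perm (Fin (n + 1))) : k.coeff π⁻¹ = k.coeff π := by
  obtain ⟨τ, hτa, hτc⟩ := exists_fix_conj π (Fin.last n)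
  have hconj : τ * π * τ⁻¹ = π⁻¹ := by
    ext x
    rw [Equiv.Perm.mul_apply, Equiv.Perm.mul_apply, hτc]
    simp
  have := conjA_coeff n τ k (hk τ hτa) π
  rwa [hconj] at this

/-- the centralizer `Z_1(n+1)` of `ℂ[S_{n+1}]` with respect to the subgroup of
permutations fixing the largest symbol is commutative. -/
theorem stmt1 (n : ℕ) (g h : MonoidAlgebra ℂ (Equiv.Perm (Fin (n + 1))))
    (hg : Z1mem n g) (hh : Z1mem n h) : g * h = h * g := by
  have hZmul : Z1mem n (g * h) := by
    intro σ hσ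
    have hmul : conjA (n + 1) σ (g * h) = conjA (n + 1) σ g * conjA (n + 1) σ h := by
      show MonoidAlgebra.mapDomain (⇑(MulAut.conj σ)) (g * h) = _
      exact MonoidAlgebra.mapDomain_mul (MulAut.conj σ) g h
    rw [hmul, hg σ hσ, hh σ hσ]
  ext π
  have e1 : (g * h).coeff π = (g * h).coeff π⁻¹ := (Z1_inv_coeff n _ hZmul π).symm
  rw [e1, MonoidAlgebra.coeff_mul_apply_right, MonoidAlgebra.coeff_mul_apply_right,
    Finsupp.sum_fintype _ _ (fun a => by simp), Finsupp.sum_fintype _ _ (fun a => by simp)]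
  apply Fintype.sum_equiv (Equiv.mulRight π)
  intro a
  have h1 : g.coeff (π⁻¹ * a⁻¹) = g.coeff (a * π) := by
    rw [← mul_inv_rev]
    exact Z1_inv_coeff n g hg (a * π)
  have h2 : h.coeff (π * (Equiv.mulRight π a)⁻¹) = h.coeff a := by
    have : π * (a * π)⁻¹ = a⁻¹ * 1 := by group
    simp only [Equiv.coe_mulRight, this, mul_one]
    exact Z1_inv_coeff n h hh a
  rw [h1, h2]
  simp only [Equiv.coe_mulRight]
  ring


end NC
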